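/- Let m > 4 and k ≥ l ≥ 0. Set z_1 = x_1 + i x_2, z_2 = x_3 + i x_4, w_1 = u_1 + i u_2, w_2 = u_3 + i u_4, and define the polynomial H_{k,l}(x,u) := z̄_1^{k−l} (z̄_1 w̄_2 − z̄_2 w̄_1)^l (bars denoting complex conjugation of the variables, so z̄_1 = x_1 − i x_2, etc.). Then H_{k,l} belongs to the space ℋ_{k,l} of simplicial harmonics, and ⟨u,∂_x⟩^{k−l} H_{k,l}(x,u) = (−1)^l (k−l)! H_{k,l}(u,x), where H_{k,l}(u,x) = w̄_1^{k−l} (w̄_1 z̄_2 − w̄_2 z̄_1)^l is obtained by interchanging the roles of x and u. -/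

import Mathlib

open MvPolynomial

noncomputable section

/-- Polynomials in two vector variables `x = (x_1,…,x_m)` (the `Sum.inl` variables)
and `u = (u_1,…,u_m)` (the `Sum.inr` variables), with complex coefficients. -/
abbrev PP (m : ℕ) := MvPolynomial (Fin m ⊕ Fin m) ℂ

/-- The Laplace operator `Δ_x` in the `x`-variables. -/
def lapX (m : ℕ) (P : PP m) : PP m :=
  ∑ j : Fin m, pderiv (Sum.inl j) (pderiv (Sum.inl j) P)

/-- The Laplace operator `Δ_u` in the `u`-variables. -/
def lapU (m : ℕ) (P : PP m) : PP m :=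
  ∑ j : Fin m, pderiv (Sum.inr j) (pderiv (Sum.inr j) P)

/-- The mixed operator `⟨∂_u,∂_x⟩ = Σ_j ∂_{u_j} ∂_{x_j}`. -/
def dudx (m : ℕ) (P : PP m) : PP m :=
  ∑ j : Fin m, pderiv (Sum.inr j) (pderiv (Sum.inl j) P)

/-- The operator `⟨x,∂_u⟩ = Σ_j x_j ∂_{u_j}`. -/
def xdu (m : ℕ) (P : PP m) : PP m :=
  ∑ j : Fin m, X (Sum.inl j) * pderiv (Sum.inr j) P

/-- The operator `⟨u,∂_x⟩ = Σ_j u_j ∂_{x_j}`. -/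
def udx (m : ℕ) (P : PP m) : PP m :=
  ∑ j : Fin m, X (Sum.inr j) * pderiv (Sum.inl j) P

/-- The polynomial `|x|² = Σ_j x_j²`. -/
def nx2 (m : ℕ) : PP m := ∑ j : Fin m, X (Sum.inl j) ^ 2

/-- The polynomial `|u|² = Σ_j u_j²`. -/
def nu2 (m : ℕ) : PP m := ∑ j : Fin m, X (Sum.inr j) ^ 2

/-- The polynomial `⟨u,x⟩ = Σ_j u_j x_j`. -/
def uxP (m : ℕ) : PP m := ∑ j : Fin m, X (Sum.inr j) * X (Sum.inl j)

/-- `P` is homogeneous of degree `p` in the `x`-variables and `q` in the `u`-variables. -/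
def IsBihom (m p q : ℕ) (P : PP m) : Prop :=
  P.IsWeightedHomogeneous (Sum.elim (fun _ => 1) (fun _ => 0)) p ∧
  P.IsWeightedHomogeneous (Sum.elim (fun _ => 0) (fun _ => 1)) q

/-- `P` belongs to the space `ℋ_{k,l}` of simplicial harmonics. -/
def IsSimp (m k l : ℕ) (P : PP m) : Prop :=
  IsBihom m k l P ∧ lapX m P = 0 ∧ lapU m P = 0 ∧ dudx m P = 0 ∧ xdu m P = 0

/-- The transvector generator `S_x` taken on bidegree `(p,·)`. -/
def opSx (m : ℕ) (p : ℤ) (P : PP m) : PP m :=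
  xdu m P - (2 * (p : ℂ) + m - 2)⁻¹ • (nx2 m * dudx m P)

/-- The transvector generator `S_u` taken on bidegree `(·,q)`. -/
def opSu (m : ℕ) (q : ℤ) (P : PP m) : PP m :=
  udx m P - (2 * (q : ℂ) + m - 2)⁻¹ • (nu2 m * dudx m P)

/-- The transvector generator `A = ⟨∂_u,∂_x⟩`. -/
def opA (m : ℕ) (P : PP m) : PP m := dudx m P

/-- The transvector generator `C` taken on bidegree `(p,q)`. -/
def opC (m : ℕ) (p q : ℤ) (P : PP m) : PP m :=
  uxP m * P - (2 * (p : ℂ) + m - 2)⁻¹ • (nx2 m * udx m P)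
    - (2 * (q : ℂ) + m - 2)⁻¹ • (nu2 m * xdu m P)
    + ((2 * (p : ℂ) + m - 2) * (2 * (q : ℂ) + m - 2))⁻¹ • (nx2 m * (nu2 m * dudx m P))

/-- `SuIter m n q P`: apply `S_u` `n` times to `P`, starting at `u`-degree `q`
(each application raises the `u`-degree by one). -/
def SuIter (m : ℕ) : ℕ → ℤ → PP m → PP m
  | 0, _, P => P
  | n+1, q, P => SuIter m n (q+1) (opSu m q P)

/-- `SxIter m n p P`: apply `S_x` `n` times to `P`, starting at `x`-degree `p`
(each application raises the `x`-degree by one). -/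
def SxIter (m : ℕ) : ℕ → ℤ → PP m → PP m
  | 0, _, P => P
  | n+1, p, P => SxIter m n (p+1) (opSx m p P)

/-- `CIter m n p q P`: apply `C` `n` times to `P`, starting at bidegree `(p,q)`. -/
def CIter (m : ℕ) : ℕ → ℤ → ℤ → PP m → PP m
  | 0, _, _, P => P
  | n+1, p, q, P => CIter m n (p+1) (q+1) (opC m p q P)

/-- `AIter m n P`: apply `A` `n` times to `P`. -/
def AIter (m : ℕ) (n : ℕ) (P : PP m) : PP m := (opA m)^[n] P

/-- The rising factorial `a^{(n)} = a(a+1)⋯(a+n-1)`. -/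
def asc (a : ℂ) : ℕ → ℂ
  | 0 => 1
  | n+1 => asc a n * (a + n)

/-- The falling factorial `a_{(n)} = a(a-1)⋯(a-n+1)`. -/
def desc (a : ℂ) : ℕ → ℂ
  | 0 => 1
  | n+1 => desc a n * (a - n)

namespace Stmt7

variable {m : ℕ}

/-- Generic bilinear gradient pairing. -/
def gF (s t : Fin m → Fin m ⊕ Fin m) (P Q : PP m) : PP m :=
  ∑ j : Fin m, pderiv (s j) P * pderiv (t j) Q

/-- Generic second-order operator. -/
def opL (s t : Fin m → Fin m ⊕ Fin m) (P : PP m) : PP m :=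
  ∑ j : Fin m, pderiv (t j) (pderiv (s j) P)

/-- Generic first-order operator. -/
def opX (s t : Fin m → Fin m ⊕ Fin m) (P : PP m) : PP m :=
  ∑ j : Fin m, X (s j) * pderiv (t j) P

lemma opL_mul (s t : Fin m → Fin m ⊕ Fin m) (P Q : PP m) :
    opL s t (P * Q) = opL s t P * Q + gF s t P Q + gF t s P Q + P * opL s t Q := by
  unfold opL gF
  rw [Finset.sum_mul, Finset.mul_sum, ← Finset.sum_add_distrib, ← Finset.sum_add_distrib,
    ← Finset.sum_add_distrib]
  refine Finset.sum_congr rfl fun j _ => ?_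
  simp only [pderiv_mul, map_add]
  ring

lemma opL_sub (s t : Fin m → Fin m ⊕ Fin m) (P Q : PP m) :
    opL s t (P - Q) = opL s t P - opL s t Q := by
  simp [opL, Finset.sum_sub_distrib]

lemma gF_mul_right (s t : Fin m → Fin m ⊕ Fin m) (P Q R : PP m) :
    gF s t P (Q * R) = gF s t P Q * R + Q * gF s t P R := by
  unfold gF
  rw [Finset.sum_mul, Finset.mul_sum, ← Finset.sum_add_distrib]
  refine Finset.sum_congr rfl fun j _ => ?_
  rw [pderiv_mul]; ring

lemma gF_mul_left (s t : Fin m → Fin m ⊕ Fin m) (P Q R : PP m) :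
    gF s t (P * Q) R = gF s t P R * Q + P * gF s t Q R := by
  unfold gF
  rw [Finset.sum_mul, Finset.mul_sum, ← Finset.sum_add_distrib]
  refine Finset.sum_congr rfl fun j _ => ?_
  rw [pderiv_mul]; ring

lemma gF_sub_left (s t : Fin m → Fin m ⊕ Fin m) (P Q R : PP m) :
    gF s t (P - Q) R = gF s t P R - gF s t Q R := by
  simp [gF, sub_mul, Finset.sum_sub_distrib]

lemma gF_sub_right (s t : Fin m → Fin m ⊕ Fin m) (P Q R : PP m) :
    gF s t P (Q - R) = gF s t P Q - gF s t P R := by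
  simp [gF, mul_sub, Finset.sum_sub_distrib]

lemma opX_mul (s t : Fin m → Fin m ⊕ Fin m) (P Q : PP m) :
    opX s t (P * Q) = opX s t P * Q + P * opX s t Q := by
  unfold opX
  rw [Finset.sum_mul, Finset.mul_sum, ← Finset.sum_add_distrib]
  refine Finset.sum_congr rfl fun j _ => ?_
  rw [pderiv_mul]; ring

lemma opX_sub (s t : Fin m → Fin m ⊕ Fin m) (P Q : PP m) :
    opX s t (P - Q) = opX s t P - opX s t Q := by
  simp [opX, mul_sub, Finset.sum_sub_distrib]

lemma opX_smul (s t : Fin m → Fin m ⊕ Fin m) (c : ℂ) (P : PP m) :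
    opX s t (c • P) = c • opX s t P := by
  simp [opX, Finset.smul_sum, mul_smul_comm]

end Stmt7
namespace Stmt7

variable {m : ℕ}

def side : Bool → Fin m → Fin m ⊕ Fin m
  | false => Sum.inl
  | true => Sum.inr

def p0 (hm : 4 < m) : Bool → Fin m
  | false => ⟨0, by omega⟩
  | true => ⟨2, by omega⟩

def p1 (hm : 4 < m) : Bool → Fin m
  | false => ⟨1, by omega⟩
  | true => ⟨3, by omega⟩

/-- The four generators: `gen ff ff = z̄₁`, `gen ff tt = z̄₂`, `gen tt ff = w̄₁`, `gen tt tt = w̄₂`. -/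
def gen (hm : 4 < m) (σ i : Bool) : PP m :=
  X (side σ (p0 hm i)) - Complex.I • X (side σ (p1 hm i))

def cf (hm : 4 < m) (i : Bool) (j : Fin m) : ℂ :=
  (if p0 hm i = j then 1 else 0) - Complex.I * (if p1 hm i = j then 1 else 0)

lemma pderiv_gen (hm : 4 < m) (τ σ i : Bool) (j : Fin m) :
    pderiv (side τ j) (gen hm σ i) = if τ = σ then C (cf hm i j) else 0 := by
  cases τ <;> cases σ <;> cases i <;>
    simp [gen, cf, side, Pi.single_apply, smul_eq_C_mul, apply_ite (C : ℂ → PP m),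
      mul_ite, sub_eq_zero]

lemma ne_p01 (hm : 4 < m) (i : Bool) : p0 hm i ≠ p1 hm i := by
  cases i <;> simp [p0, p1, Fin.ext_iff]

lemma sum_two {M : Type*} [AddCommMonoid M] (f : Fin m → M) (a b : Fin m) (hab : a ≠ b)
    (h : ∀ j, j ≠ a → j ≠ b → f j = 0) : ∑ j, f j = f a + f b := by
  classical
  have key : ∑ j ∈ ({a, b} : Finset (Fin m)), f j = ∑ j, f j := by
    apply Finset.sum_subset (Finset.subset_univ _)
    intro x _ hx
    simp only [Finset.mem_insert, Finset.mem_singleton, not_or] at hx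
    exact h x hx.1 hx.2
  rw [← key, Finset.sum_insert (by simp [hab]), Finset.sum_singleton]

lemma cf_eq_zero (hm : 4 < m) (i : Bool) (j : Fin m) (h0 : j ≠ p0 hm i) (h1 : j ≠ p1 hm i) :
    cf hm i j = 0 := by
  simp [cf, (Ne.symm h0), (Ne.symm h1)]

lemma sum_cf (hm : 4 < m) (i1 i2 : Bool) :
    ∑ j : Fin m, cf hm i1 j * cf hm i2 j = 0 := by
  rw [sum_two _ (p0 hm i1) (p1 hm i1) (ne_p01 hm i1)
    (fun j h0 h1 => by rw [cf_eq_zero hm i1 j h0 h1, zero_mul])]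
  cases i1 <;> cases i2 <;>
    simp [cf, p0, p1, Fin.ext_iff] <;> ring_nf <;> simp [Complex.I_sq]

end Stmt7
namespace Stmt7

variable {m : ℕ}

lemma gF_gen_gen (hm : 4 < m) (τ1 τ2 σ1 σ2 i1 i2 : Bool) :
    gF (side τ1) (side τ2) (gen hm σ1 i1) (gen hm σ2 i2) = 0 := by
  unfold gF
  simp only [pderiv_gen]
  by_cases h1 : τ1 = σ1
  · by_cases h2 : τ2 = σ2
    · subst h1; subst h2
      simp only [if_pos rfl, if_true, ite_true, ← map_mul]
      rw [← map_sum, sum_cf, map_zero]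
    · simp [h2]
  · simp [h1]

lemma opL_gen (hm : 4 < m) (τ1 τ2 σ i : Bool) :
    opL (side τ1) (side τ2) (gen hm σ i) = 0 := by
  unfold opL
  refine Finset.sum_eq_zero fun j _ => ?_
  rw [pderiv_gen]
  split <;> simp [pderiv_C]

lemma opX_gen (hm : 4 < m) (τ1 τ2 σ i : Bool) :
    opX (side τ1) (side τ2) (gen hm σ i) = if τ2 = σ then gen hm τ1 i else 0 := by
  unfold opX
  simp only [pderiv_gen]
  split
  · rw [sum_two _ (p0 hm i) (p1 hm i) (ne_p01 hm i)
      (fun j h0 h1 => by rw [cf_eq_zero hm i j h0 h1, map_zero, mul_zero])]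
    have c0 : cf hm i (p0 hm i) = 1 := by
      simp [cf, (ne_p01 hm i).symm]
    have c1 : cf hm i (p1 hm i) = -Complex.I := by
      simp [cf, ne_p01 hm i]
    rw [c0, c1, gen]
    simp [smul_eq_C_mul]
    ring
  · simp

/-- `Dp = z̄₁ w̄₂ − z̄₂ w̄₁`. -/
def Dp (hm : 4 < m) : PP m :=
  gen hm false false * gen hm true true - gen hm false true * gen hm true false

lemma gF_gen_D (hm : 4 < m) (τ1 τ2 σ i : Bool) :
    gF (side τ1) (side τ2) (gen hm σ i) (Dp hm) = 0 := by
  simp [Dp, gF_sub_right, gF_mul_right, gF_gen_gen]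

lemma gF_D_gen (hm : 4 < m) (τ1 τ2 σ i : Bool) :
    gF (side τ1) (side τ2) (Dp hm) (gen hm σ i) = 0 := by
  simp [Dp, gF_sub_left, gF_mul_left, gF_gen_gen]

lemma gF_D_D (hm : 4 < m) (τ1 τ2 : Bool) :
    gF (side τ1) (side τ2) (Dp hm) (Dp hm) = 0 := by
  simp [Dp, gF_sub_left, gF_sub_right, gF_mul_left, gF_mul_right, gF_gen_gen]

lemma gF_one_right (s t : Fin m → Fin m ⊕ Fin m) (P : PP m) : gF s t P 1 = 0 := by
  simp [gF, pderiv_one]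

lemma gF_one_left (s t : Fin m → Fin m ⊕ Fin m) (P : PP m) : gF s t 1 P = 0 := by
  simp [gF, pderiv_one]

lemma gF_pow_right (s t : Fin m → Fin m ⊕ Fin m) {P Q : PP m}
    (h : gF s t P Q = 0) (n : ℕ) : gF s t P (Q ^ n) = 0 := by
  induction n with
  | zero => simpa using gF_one_right s t P
  | succ n ih => rw [pow_succ, gF_mul_right, ih, h]; simp

lemma gF_pow_left (s t : Fin m → Fin m ⊕ Fin m) {P Q : PP m}
    (h : gF s t P Q = 0) (n : ℕ) : gF s t (P ^ n) Q = 0 := by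
  induction n with
  | zero => simpa using gF_one_left s t Q
  | succ n ih => rw [pow_succ, gF_mul_left, ih, h]; simp

lemma opL_one (s t : Fin m → Fin m ⊕ Fin m) : opL (m := m) s t 1 = 0 := by
  simp [opL, pderiv_one]

lemma opL_pow (s t : Fin m → Fin m ⊕ Fin m) {P : PP m}
    (h0 : opL s t P = 0) (h1 : gF s t P P = 0) (h2 : gF t s P P = 0) (n : ℕ) :
    opL s t (P ^ n) = 0 := by
  induction n with
  | zero => simpa using opL_one (m := m) s t
  | succ n ih =>
      rw [pow_succ, opL_mul, ih, h0, gF_pow_left s t h1 n, gF_pow_left t s h2 n]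
      simp

lemma opL_D (hm : 4 < m) (τ1 τ2 : Bool) : opL (side τ1) (side τ2) (Dp hm) = 0 := by
  simp [Dp, opL_sub, opL_mul, opL_gen, gF_gen_gen]

/-- The master vanishing lemma for the three second-order operators. -/
lemma opL_main (hm : 4 < m) (τ1 τ2 : Bool) (a l : ℕ) :
    opL (side τ1) (side τ2) (gen hm false false ^ a * Dp hm ^ l) = 0 := by
  rw [opL_mul,
    opL_pow _ _ (opL_gen hm τ1 τ2 false false) (gF_gen_gen hm τ1 τ2 false false false false)
      (gF_gen_gen hm τ2 τ1 false false false false) a,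
    opL_pow _ _ (opL_D hm τ1 τ2) (gF_D_D hm τ1 τ2) (gF_D_D hm τ2 τ1) l,
    gF_pow_left _ _ (gF_pow_right _ _ (gF_gen_D hm τ1 τ2 false false) l) a,
    gF_pow_left _ _ (gF_pow_right _ _ (gF_gen_D hm τ2 τ1 false false) l) a]
  simp

end Stmt7
namespace Stmt7

variable {m : ℕ}

lemma opX_one (s t : Fin m → Fin m ⊕ Fin m) : opX (m := m) s t 1 = 0 := by
  simp [opX, pderiv_one]

lemma opX_pow_zero (s t : Fin m → Fin m ⊕ Fin m) {P : PP m}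
    (h : opX s t P = 0) (n : ℕ) : opX s t (P ^ n) = 0 := by
  induction n with
  | zero => simpa using opX_one (m := m) s t
  | succ n ih => rw [pow_succ, opX_mul, ih, h]; simp

/-- `⟨x,∂_u⟩ D = 0`. -/
lemma xdu_D (hm : 4 < m) : opX (side false) (side true) (Dp hm) = 0 := by
  simp only [Dp, opX_sub, opX_mul, opX_gen]
  simp
  ring

/-- `⟨u,∂_x⟩ D = 0`. -/
lemma udx_D (hm : 4 < m) : opX (side true) (side false) (Dp hm) = 0 := by
  simp only [Dp, opX_sub, opX_mul, opX_gen]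
  simp
  ring

/-- `⟨x,∂_u⟩` annihilates `z̄₁^a D^l`. -/
lemma xdu_main (hm : 4 < m) (a l : ℕ) :
    opX (side false) (side true) (gen hm false false ^ a * Dp hm ^ l) = 0 := by
  have hz : opX (side false) (side true) (gen hm false false) = 0 := by
    rw [opX_gen]; simp
  rw [opX_mul, opX_pow_zero _ _ hz, opX_pow_zero _ _ (xdu_D hm)]
  simp

lemma udx_gen_pow (hm : 4 < m) (n : ℕ) :
    opX (side true) (side false) (gen hm false false ^ (n + 1)) =
      ((n + 1 : ℕ) : ℂ) • (gen hm false false ^ n * gen hm true false) := by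
  induction n with
  | zero =>
      rw [pow_one, pow_zero, one_mul, opX_gen]
      simp
  | succ n ih =>
      rw [pow_succ, opX_mul, ih, opX_gen]
      simp only [if_pos rfl, if_true, ite_true]
      push_cast
      simp only [smul_eq_C_mul, map_add, map_one]
      ring

lemma udx_iter_smul (n : ℕ) (c : ℂ) (P : PP m) :
    (udx m)^[n] (c • P) = c • (udx m)^[n] P := by
  induction n generalizing P with
  | zero => simp
  | succ n ih =>
      rw [Function.iterate_succ_apply, Function.iterate_succ_apply]
      rw [show udx m (c • P) = c • udx m P from opX_smul (side true) (side false) c P, ih]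

/-- The main iteration formula. -/
lemma iter_main (hm : 4 < m) (l : ℕ) :
    ∀ n b : ℕ, (udx m)^[n] (gen hm false false ^ n * (gen hm true false ^ b * Dp hm ^ l)) =
      ((n.factorial : ℕ) : ℂ) • (gen hm true false ^ (n + b) * Dp hm ^ l) := by
  intro n
  induction n with
  | zero => intro b; simp
  | succ n ih =>
      intro b
      rw [Function.iterate_succ_apply]
      have hW : opX (side true) (side false) (gen hm true false) = 0 := by
        rw [opX_gen]; simp
      have h1 : udx m (gen hm false false ^ (n + 1) * (gen hm true false ^ b * Dp hm ^ l)) =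
          ((n + 1 : ℕ) : ℂ) •
            (gen hm false false ^ n * (gen hm true false ^ (b + 1) * Dp hm ^ l)) := by
        show opX (side true) (side false) _ = _
        rw [opX_mul, udx_gen_pow hm n, opX_mul, opX_pow_zero _ _ hW,
          opX_pow_zero _ _ (udx_D hm)]
        simp only [zero_mul, mul_zero, add_zero, zero_add, smul_mul_assoc]
        congr 1
        ring
      rw [h1, udx_iter_smul, ih (b + 1), smul_smul]
      rw [show n + (b + 1) = n + 1 + b by omega, Nat.factorial_succ]
      push_cast
      ring_nf

end Stmt7
namespace Stmt7

variable {m : ℕ}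

lemma hom_gen (hm : 4 < m) (σ i : Bool) (w : Fin m ⊕ Fin m → ℕ) (d : ℕ)
    (h0 : w (side σ (p0 hm i)) = d) (h1 : w (side σ (p1 hm i)) = d) :
    IsWeightedHomogeneous w (gen hm σ i) d := by
  rw [gen, ← mem_weightedHomogeneousSubmodule]
  refine Submodule.sub_mem _ ?_ (Submodule.smul_mem _ _ ?_) <;>
    rw [mem_weightedHomogeneousSubmodule]
  · exact h0 ▸ isWeightedHomogeneous_X ℂ w _
  · exact h1 ▸ isWeightedHomogeneous_X ℂ w _

lemma wh_pow {w : Fin m ⊕ Fin m → ℕ} {P : PP m} {d : ℕ}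
    (h : IsWeightedHomogeneous w P d) (n : ℕ) : IsWeightedHomogeneous w (P ^ n) (n * d) := by
  induction n with
  | zero => simpa using isWeightedHomogeneous_one ℂ w
  | succ n ih =>
      rw [pow_succ]
      have := ih.mul h
      rwa [show n * d + d = (n + 1) * d by ring] at this

lemma bihom_main (hm : 4 < m) (k l : ℕ) (hkl : l ≤ k) :
    IsBihom m k l (gen hm false false ^ (k - l) * Dp hm ^ l) := by
  have hZx : IsWeightedHomogeneous (Sum.elim (fun _ => 1) (fun _ => 0))
      (gen hm false false) 1 := hom_gen hm false false _ 1 rfl rfl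
  have hZ2x : IsWeightedHomogeneous (Sum.elim (fun _ => 1) (fun _ => 0))
      (gen hm false true) 1 := hom_gen hm false true _ 1 rfl rfl
  have hW1x : IsWeightedHomogeneous (Sum.elim (fun _ => 1) (fun _ => 0))
      (gen hm true false) 0 := hom_gen hm true false _ 0 rfl rfl
  have hW2x : IsWeightedHomogeneous (Sum.elim (fun _ => 1) (fun _ => 0))
      (gen hm true true) 0 := hom_gen hm true true _ 0 rfl rfl
  have hZu : IsWeightedHomogeneous (Sum.elim (fun _ => 0) (fun _ => 1))
      (gen hm false false) 0 := hom_gen hm false false _ 0 rfl rfl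
  have hZ2u : IsWeightedHomogeneous (Sum.elim (fun _ => 0) (fun _ => 1))
      (gen hm false true) 0 := hom_gen hm false true _ 0 rfl rfl
  have hW1u : IsWeightedHomogeneous (Sum.elim (fun _ => 0) (fun _ => 1))
      (gen hm true false) 1 := hom_gen hm true false _ 1 rfl rfl
  have hW2u : IsWeightedHomogeneous (Sum.elim (fun _ => 0) (fun _ => 1))
      (gen hm true true) 1 := hom_gen hm true true _ 1 rfl rfl
  have hDx : IsWeightedHomogeneous (Sum.elim (fun _ => 1) (fun _ => 0)) (Dp hm) 1 := by
    rw [Dp, ← mem_weightedHomogeneousSubmodule]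
    refine Submodule.sub_mem _ ?_ ?_ <;> rw [mem_weightedHomogeneousSubmodule]
    · simpa using hZx.mul hW2x
    · simpa using hZ2x.mul hW1x
  have hDu : IsWeightedHomogeneous (Sum.elim (fun _ => 0) (fun _ => 1)) (Dp hm) 1 := by
    rw [Dp, ← mem_weightedHomogeneousSubmodule]
    refine Submodule.sub_mem _ ?_ ?_ <;> rw [mem_weightedHomogeneousSubmodule]
    · simpa using hZu.mul hW2u
    · simpa using hZ2u.mul hW1u
  constructor
  · have := (wh_pow hZx (k - l)).mul (wh_pow hDx l)
    rwa [show (k - l) * 1 + l * 1 = k by omega] at this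
  · have := (wh_pow hZu (k - l)).mul (wh_pow hDu l)
    rwa [show (k - l) * 0 + l * 1 = l by omega] at this

end Stmt7

open Stmt7

/-- the highest weight vector `H_{k,l} = z̄₁^{k−l} (z̄₁w̄₂ − z̄₂w̄₁)^l`
is a simplicial harmonic, and `⟨u,∂_x⟩^{k−l} H_{k,l}(x,u) = (−1)^l (k−l)! H_{k,l}(u,x)`. -/
theorem stmt_7 (m k l : ℕ) (hm : 4 < m) (hkl : l ≤ k) :
    ∀ z1 z2 w1 w2 : PP m,
      z1 = X (Sum.inl ⟨0, by omega⟩) - Complex.I • X (Sum.inl ⟨1, by omega⟩) →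
      z2 = X (Sum.inl ⟨2, by omega⟩) - Complex.I • X (Sum.inl ⟨3, by omega⟩) →
      w1 = X (Sum.inr ⟨0, by omega⟩) - Complex.I • X (Sum.inr ⟨1, by omega⟩) →
      w2 = X (Sum.inr ⟨2, by omega⟩) - Complex.I • X (Sum.inr ⟨3, by omega⟩) →
      IsSimp m k l (z1 ^ (k - l) * (z1 * w2 - z2 * w1) ^ l) ∧
      (udx m)^[k - l] (z1 ^ (k - l) * (z1 * w2 - z2 * w1) ^ l)
        = ((-1) ^ l * (k - l).factorial : ℂ) • (w1 ^ (k - l) * (w1 * z2 - w2 * z1) ^ l) := by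
  intro z1 z2 w1 w2 hz1 hz2 hw1 hw2
  subst hz1 hz2 hw1 hw2
  constructor
  · exact ⟨bihom_main hm k l hkl, opL_main hm false false (k - l) l,
      opL_main hm true true (k - l) l, opL_main hm false true (k - l) l,
      xdu_main hm (k - l) l⟩
  · have h := iter_main hm l (k - l) 0
    rw [pow_zero, one_mul, Nat.add_zero] at h
    refine h.trans ?_
    show (((k - l).factorial : ℕ) : ℂ) • (gen hm true false ^ (k - l) * Dp hm ^ l)
      = ((-1) ^ l * (k - l).factorial : ℂ) • (gen hm true false ^ (k - l) *
        (gen hm true false * gen hm false true - gen hm true true * gen hm false false) ^ l)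
    have e2 : (gen hm true false * gen hm false true - gen hm true true * gen hm false false) ^ l
        = ((-1 : ℂ) ^ l) • Dp hm ^ l := by
      rw [show gen hm true false * gen hm false true - gen hm true true * gen hm false false
          = (-1 : ℂ) • Dp hm by rw [Dp]; simp only [smul_eq_C_mul, map_neg, map_one]; ring,
        smul_pow]
    rw [e2, mul_smul_comm, smul_smul]
    congr 1
    rw [mul_comm ((-1 : ℂ) ^ l), mul_assoc, ← mul_pow]
    norm_num
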